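/- For every countable subset D of the unit sphere S² ⊂ ℝ³, there exists a rotation g ∈ SO(3) such that the iterated images of D under g are pairwise disjoint: for all natural numbers m ≠ n, g^m(D) ∩ g^n(D) = ∅. -/

import Mathlib

open Pointwise Matrix

set_option synthInstance.maxHeartbeats 1000000
set_option maxHeartbeats 1000000

/-- The unitary/orthogonal group acts on vectors by matrix multiplication. -/
instance unitarySMulVec {n : ℕ} {K : Type*} [CommRing K] [StarRing K] :
    MulAction (Matrix.unitaryGroup (Fin n) K) (Fin n → K) where
  smul g v := (g : Matrix (Fin n) (Fin n) K).mulVec v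
  one_smul v := by
    show (1 : Matrix.unitaryGroup (Fin n) K).1.mulVec v = v
    simp
  mul_smul g h v := by
    show (g * h : Matrix.unitaryGroup (Fin n) K).1.mulVec v
        = g.1.mulVec (h.1.mulVec v)
    simp [Matrix.mulVec_mulVec]

/-- The `n`-dimensional unit sphere `Sⁿ = {x ∈ ℝⁿ⁺¹ : x₁² + ⋯ + x_{n+1}² = 1}`. -/
def SphereSet (n : ℕ) : Set (Fin (n + 1) → ℝ) := {x | ∑ i, x i ^ 2 = 1}

/-- `SO(n)`, the special orthogonal group, as a subgroup of the orthogonal group. -/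
def SO (n : ℕ) : Subgroup (Matrix.orthogonalGroup (Fin n) ℝ) where
  carrier := {g | (g : Matrix (Fin n) (Fin n) ℝ).det = 1}
  one_mem' := by simp
  mul_mem' := by
    intro a b ha hb
    simp only [Set.mem_setOf_eq] at *
    rw [Matrix.UnitaryGroup.mul_val, Matrix.det_mul, ha, hb, mul_one]
  inv_mem' := by
    intro a ha
    simp only [Set.mem_setOf_eq] at *
    have h : ((a : Matrix (Fin n) (Fin n) ℝ) * ((a⁻¹ : Matrix.orthogonalGroup (Fin n) ℝ) :
        Matrix (Fin n) (Fin n) ℝ)).det = 1 := by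
      rw [← Matrix.UnitaryGroup.mul_val, mul_inv_cancel]
      simp
    rw [Matrix.det_mul, ha, one_mul] at h
    exact h


noncomputable def Rz (θ : ℝ) : Matrix (Fin 3) (Fin 3) ℝ :=
  !![Real.cos θ, -Real.sin θ, 0; Real.sin θ, Real.cos θ, 0; 0, 0, 1]

lemma Rz_mul (α β : ℝ) : Rz α * Rz β = Rz (α + β) := by
  ext i j
  fin_cases i <;> fin_cases j <;>
    simp [Rz, Matrix.mul_apply, Fin.sum_univ_three, Real.cos_add, Real.sin_add] <;> ring

lemma Rz_zero : Rz 0 = 1 := by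
  rw [Rz, Matrix.one_fin_three]; norm_num

lemma star_Rz (θ : ℝ) : star (Rz θ) = Rz (-θ) := by
  ext i j
  fin_cases i <;> fin_cases j <;>
    simp [Rz, Matrix.star_eq_conjTranspose, Matrix.conjTranspose_apply]

lemma Rz_mem (θ : ℝ) : Rz θ ∈ Matrix.orthogonalGroup (Fin 3) ℝ := by
  rw [Matrix.mem_unitaryGroup_iff, star_Rz, Rz_mul, add_neg_cancel, Rz_zero]

lemma Rz_det (θ : ℝ) : (Rz θ).det = 1 := by
  simp [Rz, Matrix.det_fin_three]
  nlinarith [Real.sin_sq_add_cos_sq θ]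

lemma Rz_pow (θ : ℝ) (k : ℕ) : (Rz θ) ^ k = Rz (k * θ) := by
  induction k with
  | zero => simp [Rz_zero]
  | succ n ih => rw [pow_succ, ih, Rz_mul]; push_cast; ring_nf

noncomputable def hmat (a b : ℝ) : Matrix (Fin 3) (Fin 3) ℝ :=
  !![-b, 0, a; a, 0, b; 0, 1, 0]

lemma star_hmat (a b : ℝ) : star (hmat a b) = !![-b, a, 0; 0, 0, 1; a, b, 0] := by
  ext i j
  fin_cases i <;> fin_cases j <;>
    simp [hmat, Matrix.star_eq_conjTranspose, Matrix.conjTranspose_apply]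

lemma hmat_mem {a b : ℝ} (hab : a ^ 2 + b ^ 2 = 1) :
    hmat a b ∈ Matrix.orthogonalGroup (Fin 3) ℝ := by
  rw [Matrix.mem_unitaryGroup_iff, star_hmat]
  ext i j
  fin_cases i <;> fin_cases j <;>
    simp [hmat, Matrix.mul_apply, Fin.sum_univ_three, Matrix.one_apply] <;> nlinarith

lemma hmat_star_mul {a b : ℝ} (hab : a ^ 2 + b ^ 2 = 1) :
    star (hmat a b) * hmat a b = 1 := by
  rw [star_hmat]
  ext i j
  fin_cases i <;> fin_cases j <;>
    simp [hmat, Matrix.mul_apply, Fin.sum_univ_three, Matrix.one_apply] <;> nlinarith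

lemma Rz_mulVec (φ : ℝ) (u : Fin 3 → ℝ) :
    (Rz φ).mulVec u = ![Real.cos φ * u 0 - Real.sin φ * u 1,
      Real.sin φ * u 0 + Real.cos φ * u 1, u 2] := by
  ext i
  fin_cases i <;> simp [Rz, Matrix.mulVec, dotProduct, Fin.sum_univ_three] <;> ring

lemma exp_key (φ : ℝ) (u v : Fin 3 → ℝ) (h : (Rz φ).mulVec u = v) :
    Complex.exp (φ * Complex.I) * (u 0 + u 1 * Complex.I) = v 0 + v 1 * Complex.I := by
  rw [Rz_mulVec] at h
  have h0 := congrFun h 0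
  have h1 := congrFun h 1
  simp at h0 h1
  rw [Complex.exp_mul_I]
  apply Complex.ext <;>
    simp [Complex.add_re, Complex.add_im, Complex.mul_re, Complex.mul_im, ← h0, ← h1] <;> ring

lemma fiber_countable (k : ℕ) (hk : 1 ≤ k) (u v : Fin 3 → ℝ)
    (hu : ¬(u 0 = 0 ∧ u 1 = 0)) :
    {θ : ℝ | (Rz (k * θ)).mulVec u = v}.Countable := by
  set S := {θ : ℝ | (Rz (k * θ)).mulVec u = v} with hS
  rcases S.eq_empty_or_nonempty with h | ⟨θ₀, hθ₀⟩
  · simp [h]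
  have hz : (u 0 : ℂ) + u 1 * Complex.I ≠ 0 := by
    intro h
    rw [Complex.ext_iff] at h
    simp at h
    exact hu h
  have hsub : S ⊆ Set.range (fun n : ℤ => θ₀ + n * (2 * Real.pi) / k) := by
    intro θ hθ
    have e1 := exp_key _ _ _ hθ
    have e2 := exp_key _ _ _ hθ₀
    rw [← e2] at e1
    have := mul_right_cancel₀ hz e1
    rw [Complex.exp_eq_exp_iff_exists_int] at this
    obtain ⟨n, hn⟩ := this
    refine ⟨n, ?_⟩
    have him := congrArg Complex.im hn
    push_cast at him
    simp [Complex.add_im, Complex.mul_im] at him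
    have hk0 : (k : ℝ) ≠ 0 := by positivity
    field_simp
    nlinarith [him]
  exact Set.Countable.mono hsub (Set.countable_range _)

lemma conjPow (hm s R : Matrix (Fin 3) (Fin 3) ℝ) (hs : s * hm = 1) (hs' : hm * s = 1)
    (k : ℕ) : (hm * R * s) ^ k = hm * R ^ k * s := by
  induction k with
  | zero => simp [pow_zero, mul_one, hs']
  | succ n ih =>
    rw [pow_succ, ih, pow_succ]
    have e : hm * R ^ n * s * (hm * R * s) = hm * R ^ n * ((s * hm) * (R * s)) := by
      simp only [mul_assoc]
    rw [e, hs, one_mul, ← mul_assoc, ← mul_assoc]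

noncomputable def Fm (t : ℝ) : Fin 3 → ℝ := ![2*t/(1+t^2), (t^2-1)/(1+t^2), 0]

lemma Fm_inj : Function.Injective Fm := by
  intro t s h
  have h0 := congrFun h 0
  have h1 := congrFun h 1
  simp [Fm] at h0 h1
  have ht : (0:ℝ) < 1+t^2 := by positivity
  have hs : (0:ℝ) < 1+s^2 := by positivity
  rw [div_eq_div_iff (by positivity) (by positivity)] at h0 h1
  have e2 : t^2 = s^2 := by nlinarith
  have e1 : t * (1+t^2) = s * (1+t^2) := by linear_combination h0/2 + t*e2
  exact mul_right_cancel₀ (ne_of_gt ht) e1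

theorem exists_rotation_iterates_disjoint (D : Set (Fin 3 → ℝ))
    (hD : D ⊆ SphereSet 2) (hDc : D.Countable) :
    ∃ g : SO 3, ∀ m n : ℕ, m ≠ n → Disjoint ((g ^ m) • D) ((g ^ n) • D) := by
  classical
  obtain ⟨t, ht⟩ : ∃ t : ℝ, Fm t ∉ D ∪ (fun x => -x) '' D := by
    by_contra hcon
    push_neg at hcon
    have hEc : (D ∪ (fun x : Fin 3 → ℝ => -x) '' D).Countable := hDc.union (hDc.image _)
    have : (Set.univ : Set ℝ).Countable :=
      Set.Countable.mono (fun t _ => hcon t) (hEc.preimage Fm_inj)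
    exact Cardinal.not_countable_real this
  set a : ℝ := 2*t/(1+t^2) with ha
  set b : ℝ := (t^2-1)/(1+t^2) with hb
  have hFm : Fm t = ![a, b, 0] := rfl
  have hab : a^2 + b^2 = 1 := by
    have h1t : (1:ℝ)+t^2 ≠ 0 := by positivity
    rw [ha, hb]
    field_simp
    ring
  rw [hFm] at ht
  have hpD : (![a,b,0] : Fin 3 → ℝ) ∉ D := fun h => ht (Or.inl h)
  have hpD' : (-![a,b,0] : Fin 3 → ℝ) ∉ D := by
    intro h
    exact ht (Or.inr ⟨_, h, by simp⟩)
  have hmul1 : hmat a b * star (hmat a b) = 1 :=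
    Matrix.mem_unitaryGroup_iff.1 (hmat_mem hab)
  -- key nonvanishing
  have key0 : ∀ x ∈ D, ¬((star (hmat a b)).mulVec x 0 = 0 ∧ (star (hmat a b)).mulVec x 1 = 0) := by
    rintro x hx ⟨h0, h1⟩
    set u := (star (hmat a b)).mulVec x with hu
    set c := u 2 with hc
    have hxu : x = (hmat a b).mulVec u := by
      rw [hu, Matrix.mulVec_mulVec, hmul1, Matrix.one_mulVec]
    have hueq : u = ![0,0,c] := by
      funext i; fin_cases i
      · exact h0
      · exact h1
      · rfl
    have hxc : x = ![a*c, b*c, 0] := by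
      rw [hxu, hueq]
      ext i
      fin_cases i <;>
        simp [hmat, Matrix.mulVec, dotProduct, Fin.sum_univ_three] <;> ring
    have hsx : ∑ i, x i ^ 2 = 1 := hD hx
    rw [hxc] at hsx
    simp [Fin.sum_univ_three] at hsx
    have hfac : (c-1)*(c+1) = 0 := by nlinarith
    rcases mul_eq_zero.1 hfac with h | h
    · have hc1 : c = 1 := by linarith
      apply hpD
      have : x = ![a, b, 0] := by rw [hxc, hc1]; norm_num
      rwa [this] at hx
    · have hc1 : c = -1 := by linarith
      apply hpD'
      have : x = -![a, b, 0] := by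
        rw [hxc, hc1]
        funext i; fin_cases i <;> simp
      rwa [this] at hx
  -- choose a good angle
  obtain ⟨θ, hθ⟩ : ∃ θ : ℝ, θ ∉ ⋃ k ∈ Set.Ici (1:ℕ), ⋃ x ∈ D, ⋃ y ∈ D,
      {θ : ℝ | (Rz (k*θ)).mulVec ((star (hmat a b)).mulVec x) = (star (hmat a b)).mulVec y} := by
    by_contra hcon
    push_neg at hcon
    have hctble : (⋃ k ∈ Set.Ici (1:ℕ), ⋃ x ∈ D, ⋃ y ∈ D,
        {θ : ℝ | (Rz (k*θ)).mulVec ((star (hmat a b)).mulVec x)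
          = (star (hmat a b)).mulVec y}).Countable :=
      Set.Countable.biUnion (Set.to_countable _) fun k hk =>
        Set.Countable.biUnion hDc fun x hx =>
          Set.Countable.biUnion hDc fun y _ =>
            fiber_countable k hk _ _ (key0 x hx)
    exact Cardinal.not_countable_real
      (Set.Countable.mono (fun θ _ => hcon θ) hctble)
  set H : Matrix.orthogonalGroup (Fin 3) ℝ := ⟨hmat a b, hmat_mem hab⟩ with hH
  set R : Matrix.orthogonalGroup (Fin 3) ℝ := ⟨Rz θ, Rz_mem θ⟩ with hR
  set g0 : Matrix.orthogonalGroup (Fin 3) ℝ := H * R * H⁻¹ with hg0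
  have hg0m : (g0 : Matrix (Fin 3) (Fin 3) ℝ) = hmat a b * Rz θ * star (hmat a b) := rfl
  have hdet : g0 ∈ SO 3 := by
    show (g0 : Matrix (Fin 3) (Fin 3) ℝ).det = 1
    rw [hg0m, Matrix.det_mul, Matrix.det_mul, Rz_det, mul_one, ← Matrix.det_mul,
      hmul1, Matrix.det_one]
  set g : SO 3 := ⟨g0, hdet⟩ with hg
  have hpow : ∀ k : ℕ, (((g ^ k : SO 3) : Matrix.orthogonalGroup (Fin 3) ℝ) :
      Matrix (Fin 3) (Fin 3) ℝ) = hmat a b * Rz (k * θ) * star (hmat a b) := by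
    intro k
    have e1 : ((g ^ k : SO 3) : Matrix.orthogonalGroup (Fin 3) ℝ) = g0 ^ k := by
      rw [hg, SubmonoidClass.coe_pow]
    rw [e1, SubmonoidClass.coe_pow, hg0m,
      conjPow _ _ _ (hmat_star_mul hab) hmul1, Rz_pow]
  have hsmul : ∀ (k : ℕ) (x : Fin 3 → ℝ),
      (g ^ k) • x = (hmat a b * Rz (k*θ) * star (hmat a b)).mulVec x := by
    intro k x
    rw [Subgroup.smul_def]
    show (((g ^ k : SO 3) : Matrix.orthogonalGroup (Fin 3) ℝ) :
      Matrix (Fin 3) (Fin 3) ℝ).mulVec x = _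
    rw [hpow]
  refine ⟨g, ?_⟩
  have main : ∀ m n : ℕ, m < n → Disjoint ((g ^ m) • D) ((g ^ n) • D) := by
    intro m n hmn
    rw [Set.disjoint_left]
    rintro A hA hB
    obtain ⟨x, hx, hgx⟩ := Set.mem_smul_set.1 hA
    obtain ⟨y, hy, hgy⟩ := Set.mem_smul_set.1 hB
    obtain ⟨k, rfl⟩ : ∃ k, n = m + k := ⟨n - m, by omega⟩
    have hk : 1 ≤ k := by omega
    have hxy : x = (g ^ k) • y := by
      have heq : (g ^ m) • x = (g ^ m) • ((g ^ k) • y) := by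
        rw [hgx, ← hgy, pow_add, mul_smul]
      exact smul_left_cancel _ heq
    have hmv : x = (hmat a b * Rz (k*θ) * star (hmat a b)).mulVec y := by
      rw [hxy, hsmul]
    have hbad : (Rz (k*θ)).mulVec ((star (hmat a b)).mulVec y)
        = (star (hmat a b)).mulVec x := by
      rw [hmv, Matrix.mulVec_mulVec, Matrix.mulVec_mulVec]
      have e : Rz ((k:ℝ)*θ) * star (hmat a b)
          = star (hmat a b) * (hmat a b * Rz ((k:ℝ)*θ) * star (hmat a b)) := by
        have e1 : star (hmat a b) * (hmat a b * Rz ((k:ℝ)*θ) * star (hmat a b))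
            = (star (hmat a b) * hmat a b) * (Rz ((k:ℝ)*θ) * star (hmat a b)) := by
          simp only [mul_assoc]
        rw [e1, hmat_star_mul hab, one_mul]
      rw [e]
    exact hθ (Set.mem_biUnion hk (Set.mem_biUnion hy (Set.mem_biUnion hx hbad)))
  intro m n hmn
  rcases lt_or_gt_of_ne hmn with h | h
  · exact main m n h
  · exact (main n m h).symm
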